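/- Let P be a poset and M a P-persistence module. If g : Q → M is a finite projective cover and h : Q' → M is any surjection from a projective module of finite rank, then the Betti table of Q is pointwise less than or equal to the Betti table of Q'; moreover Q is a direct summand of Q' (there exist g' : Q → Q' and h' : Q' → Q with h ∘ g' = g, g ∘ h' = h, and h' ∘ g' = id_Q). -/

import Mathlib

/-- A `P`-persistence module: a functor `P → Vec_k`, given explicitly. -/
structure PersMod (P : Type) [PartialOrder P] (k : Type) [Field k] : Type 1 where
  obj : P → Type
  [acg : ∀ r, AddCommGroup (obj r)]
  [mod : ∀ r, Module k (obj r)]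
  map : ∀ {r s : P}, r ≤ s → (obj r →ₗ[k] obj s)
  map_refl : ∀ (r : P) (x : obj r), map (le_refl r) x = x
  map_trans : ∀ {r s t : P} (h1 : r ≤ s) (h2 : s ≤ t) (x : obj r),
    map h2 (map h1 x) = map (le_trans h1 h2) x

attribute [instance] PersMod.acg PersMod.mod

variable {P : Type} [PartialOrder P]

/-- A morphism of persistence modules: a natural transformation. -/
structure PersHom (k : Type) [Field k] (M N : PersMod P k) where
  app : ∀ r : P, M.obj r →ₗ[k] N.obj r
  nat : ∀ {r s : P} (h : r ≤ s) (x : M.obj r),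
    app s (M.map h x) = N.map h (app r x)

/-- The finite direct sum of indicator projectives `⊕_{i ∈ I} P_{f i}`:
at grade `r` it is the free vector space on `{i // f i ≤ r}`, with structure maps
induced by the inclusions of index sets.  For `I = Unit` this is the indicator
projective `P_{f ()}` itself. -/
noncomputable def freePers (k : Type) [Field k] (I : Type) (f : I → P) : PersMod P k where
  obj r := {i : I // f i ≤ r} →₀ k
  map h := Finsupp.lmapDomain k k fun i => ⟨i.1, le_trans i.2 h⟩
  map_refl r x := by
    rw [Finsupp.lmapDomain_apply,
      show (fun i : {i : I // f i ≤ r} => (⟨i.1, le_trans i.2 (le_refl r)⟩ :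
        {i : I // f i ≤ r})) = id from rfl, Finsupp.mapDomain_id]
  map_trans h1 h2 x := by
    rw [Finsupp.lmapDomain_apply, Finsupp.lmapDomain_apply, Finsupp.lmapDomain_apply,
      ← Finsupp.mapDomain_comp]
    rfl

/-- A morphism of persistence modules is surjective if it is so at every grade. -/
def PersHom.Surj {k : Type} [Field k] {M N : PersMod P k} (g : PersHom k M N) : Prop :=
  ∀ r : P, Function.Surjective (g.app r)
/-- `g : ⊕_{i∈I} P_{f i} → M` is a finite projective cover: it is surjective and the
total number of indecomposable summands is minimal among all such surjections. -/
def IsProjCover {k : Type} [Field k] {I : Type} [Fintype I] (f : I → P) (M : PersMod P k)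
    (g : PersHom k (freePers k I f) M) : Prop :=
  g.Surj ∧ ∀ (J : Type) (_ : Fintype J) (f' : J → P)
    (g' : PersHom k (freePers k J f') M), g'.Surj →
      Fintype.card I ≤ Fintype.card J

section Aux

variable {k : Type} [Field k]

/-- Generator `e i` of `freePers k I f` at grade `f i`. -/
noncomputable def gen {I : Type} (f : I → P) (i : I) : (freePers k I f).obj (f i) :=
  Finsupp.single ⟨i, le_refl (f i)⟩ 1

lemma freePers_induction {I : Type} {f : I → P} {r : P}
    {motive : (freePers k I f).obj r → Prop} (x : (freePers k I f).obj r)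
    (zero : motive 0) (add : ∀ a b, motive a → motive b → motive (a + b))
    (single : ∀ a c, motive (Finsupp.single a c)) : motive x :=
  Finsupp.induction_linear x zero add single

/-- Build a hom out of a free module from values on generators. -/
noncomputable def mkHom {I : Type} (f : I → P) (N : PersMod P k)
    (v : ∀ i : I, N.obj (f i)) : PersHom k (freePers k I f) N where
  app r := Finsupp.lsum k fun a : {i : I // f i ≤ r} =>
    LinearMap.toSpanSingleton k _ (N.map a.2 (v a.1))
  nat {r s} hrs x := by
    induction x using Finsupp.induction_linear with
    | zero =>
      show Finsupp.lsum k _ ((Finsupp.lmapDomain k k _) 0) = N.map hrs (Finsupp.lsum k _ 0)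
      simp
    | add a b ha hb =>
      show Finsupp.lsum k _ ((Finsupp.lmapDomain k k _) (a + b))
        = N.map hrs (Finsupp.lsum k _ (a + b))
      rw [map_add, map_add, map_add, map_add]
      exact congrArg₂ (· + ·) ha hb
    | single a c =>
      show Finsupp.lsum k _ ((Finsupp.lmapDomain k k _) (Finsupp.single a c)) = _
      rw [Finsupp.lmapDomain_apply, Finsupp.mapDomain_single]
      beta_reduce
      erw [Finsupp.lsum_single, Finsupp.lsum_single, LinearMap.toSpanSingleton_apply,
        LinearMap.toSpanSingleton_apply, map_smul, N.map_trans]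

lemma mkHom_single {I : Type} (f : I → P) (N : PersMod P k) (v : ∀ i : I, N.obj (f i))
    (r : P) (i : I) (hi : f i ≤ r) (c : k) :
    (mkHom f N v).app r (Finsupp.single ⟨i, hi⟩ c) = c • N.map hi (v i) := by
  show Finsupp.lsum k _ _ = _
  rw [Finsupp.lsum_single, LinearMap.toSpanSingleton_apply]

lemma freePers_map_single {I : Type} (f : I → P) {r s : P} (hrs : r ≤ s)
    (a : {i : I // f i ≤ r}) (c : k) :
    (freePers k I f).map hrs (Finsupp.single a c)
      = Finsupp.single ⟨a.1, le_trans a.2 hrs⟩ c := by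
  show (Finsupp.lmapDomain k k _) _ = _
  rw [Finsupp.lmapDomain_apply, Finsupp.mapDomain_single]

lemma hom_single {I : Type} {f : I → P} {N : PersMod P k}
    (φ : PersHom k (freePers k I f) N) (r : P) (i : I) (hi : f i ≤ r) (c : k) :
    φ.app r (Finsupp.single ⟨i, hi⟩ c) = c • N.map hi (φ.app (f i) (gen f i)) := by
  have h1 := φ.nat hi (Finsupp.single ⟨i, le_refl (f i)⟩ c)
  rw [freePers_map_single] at h1
  rw [h1]
  have h2 : (Finsupp.single (⟨i, le_refl (f i)⟩ : {j : I // f j ≤ f i}) c)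
      = c • gen f i (k := k) := by
    rw [gen]; exact (Finsupp.smul_single_one _ c).symm
  rw [h2, map_smul, map_smul]

end Aux
section Aux2

variable {k : Type} [Field k]

/-- Composition of persistence morphisms. -/
def PersHom.comp {A B C : PersMod P k} (ψ : PersHom k B C) (φ : PersHom k A B) :
    PersHom k A C where
  app r := (ψ.app r).comp (φ.app r)
  nat {r s} hrs x := by
    simp only [LinearMap.comp_apply]
    rw [φ.nat, ψ.nat]

/-- Lift a hom from a free module through a gradewise surjection. -/
noncomputable def lift {I : Type} (f : I → P) {N M : PersMod P k} (h : PersHom k N M)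
    (hh : h.Surj) (g : PersHom k (freePers k I f) M) : PersHom k (freePers k I f) N :=
  mkHom f N fun i => (hh (f i) (g.app (f i) (gen f i))).choose

lemma lift_spec {I : Type} (f : I → P) {N M : PersMod P k} (h : PersHom k N M)
    (hh : h.Surj) (g : PersHom k (freePers k I f) M) (r : P)
    (x : (freePers k I f).obj r) : h.app r ((lift f h hh g).app r x) = g.app r x := by
  induction x using freePers_induction with
  | zero => simp
  | add a b ha hb => simp [map_add, ha, hb]
  | single a c =>
    obtain ⟨i, hi⟩ := a
    rw [lift, mkHom_single, map_smul, h.nat,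
      (hh (f i) (g.app (f i) (gen f i))).choose_spec, hom_single g r i hi c]

/-- The "radical" at grade `p`: everything coming from strictly below. -/
noncomputable def rad (M : PersMod P k) (p : P) : Submodule k (M.obj p) :=
  ⨆ q : {q : P // q < p}, LinearMap.range (M.map q.2.le)

lemma mem_rad {M : PersMod P k} {p q : P} (hq : q < p) (x : M.obj q) :
    M.map hq.le x ∈ rad M p :=
  Submodule.mem_iSup_of_mem ⟨q, hq⟩ (LinearMap.mem_range_self _ x)

/-- The family of classes of generators of grade exactly `p` in `M(p)/rad`. -/
noncomputable def bettiFam {I : Type} {f : I → P} {M : PersMod P k}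
    (φ : PersHom k (freePers k I f) M) (p : P) (a : {i : I // f i = p}) :
    M.obj p ⧸ rad M p :=
  Submodule.Quotient.mk (φ.app p (Finsupp.single ⟨a.1, a.2.le⟩ 1))

lemma bettiFam_span {I : Type} {f : I → P} {M : PersMod P k}
    (φ : PersHom k (freePers k I f) M) (hφ : φ.Surj) (p : P) :
    Submodule.span k (Set.range (bettiFam φ p)) = ⊤ := by
  rw [Submodule.eq_top_iff']
  intro y
  obtain ⟨y, rfl⟩ := Submodule.Quotient.mk_surjective _ y
  obtain ⟨x, rfl⟩ := hφ p y
  induction x using freePers_induction with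
  | zero => simp
  | add a b ha hb =>
    rw [map_add, Submodule.Quotient.mk_add]
    exact Submodule.add_mem _ ha hb
  | single a c =>
    obtain ⟨i, hi⟩ := a
    rw [hom_single φ p i hi c]
    rcases lt_or_eq_of_le hi with hlt | heq
    · have : Submodule.Quotient.mk (p := rad M p) (c • M.map hi (φ.app (f i) (gen f i)))
          = 0 := by
        rw [Submodule.Quotient.mk_eq_zero]
        exact Submodule.smul_mem _ _ (mem_rad hlt _)
      rw [this]
      exact Submodule.zero_mem _
    · have h2 : (Finsupp.single (⟨i, hi⟩ : {j : I // f j ≤ p}) c : (freePers k I f).obj p)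
          = c • (show (freePers k I f).obj p from
            Finsupp.single (α := {j : I // f j ≤ p}) ⟨i, heq.le⟩ (1 : k)) := by
        exact (Finsupp.smul_single_one _ c).symm
      rw [← hom_single φ p i hi c, h2, map_smul, Submodule.Quotient.mk_smul]
      exact Submodule.smul_mem _ _
        (Submodule.subset_span ⟨⟨i, heq⟩, rfl⟩)

end Aux2
section Aux3

variable {k : Type} [Field k]

lemma cover_li {I : Type} [Fintype I] {f : I → P} {M : PersMod P k}
    {g : PersHom k (freePers k I f) M} (hg : IsProjCover f M g) (p : P) :
    LinearIndependent k (bettiFam g p) := by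
  classical
  by_contra hnot
  rw [Fintype.linearIndependent_iff] at hnot
  push_neg at hnot
  obtain ⟨c, hc, i0', hi0⟩ := hnot
  obtain ⟨i0, hp⟩ := i0'
  subst hp
  -- the offending relation
  set t : {i : I // f i = f i0} → M.obj (f i0) :=
    fun i => g.app (f i0) (Finsupp.single ⟨i.1, i.2.le⟩ 1) with ht
  set w : M.obj (f i0) := ∑ i : {i : I // f i = f i0}, c i • t i with hwdef
  have hw : w ∈ rad M (f i0) := by
    rw [← Submodule.Quotient.mk_eq_zero]
    have : (Submodule.Quotient.mk (p := rad M (f i0)) w) = (rad M (f i0)).mkQ w := rfl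
    rw [this, hwdef, map_sum]
    simpa [Submodule.mkQ_apply, bettiFam, ht] using hc
  -- the smaller free module
  set I' := {i : I // i ≠ i0} with hI'
  set f2 : I' → P := fun i => f i.1 with hf2
  set gres : PersHom k (freePers k I' f2) M :=
    mkHom f2 M (fun i => g.app (f i.1) (gen f i.1)) with hgres
  set R : ∀ r : P, Submodule k (M.obj r) := fun r => LinearMap.range (gres.app r) with hR
  have step1 : ∀ (r : P) (i : I) (hi : f i ≤ r) (_ : i ≠ i0) (cc : k),
      g.app r (Finsupp.single ⟨i, hi⟩ cc) ∈ R r := by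
    intro r i hi hne cc
    refine ⟨Finsupp.single ⟨⟨i, hne⟩, hi⟩ cc, ?_⟩
    rw [hgres, mkHom_single, hom_single g r i hi cc]
  have step2 : rad M (f i0) ≤ R (f i0) := by
    apply iSup_le
    rintro ⟨q, hq⟩
    rintro y ⟨m, rfl⟩
    obtain ⟨x, rfl⟩ := hg.1 q m
    rw [← g.nat hq.le x]
    induction x using freePers_induction with
    | zero => simp
    | add a b ha hb => rw [map_add, map_add]; exact Submodule.add_mem _ ha hb
    | single a cc =>
      obtain ⟨i, hi⟩ := a
      rw [freePers_map_single]
      refine step1 _ i _ (fun hii => ?_) cc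
      subst hii
      exact absurd (lt_of_le_of_lt hi hq) (lt_irrefl _)
  have step3 : g.app (f i0) (gen f i0) ∈ R (f i0) := by
    have herase := Finset.add_sum_erase (Finset.univ) (fun i => c i • t i)
      (Finset.mem_univ (⟨i0, rfl⟩ : {i : I // f i = f i0}))
    have hrest : ∑ i ∈ Finset.univ.erase (⟨i0, rfl⟩ : {i : I // f i = f i0}),
        c i • t i ∈ R (f i0) := by
      refine Submodule.sum_mem _ (fun i hi => Submodule.smul_mem _ _ ?_)
      refine step1 _ i.1 i.2.le (fun hii => ?_) 1
      exact (Finset.mem_erase.1 hi).1 (Subtype.ext hii)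
    have hc1 : c ⟨i0, rfl⟩ • t ⟨i0, rfl⟩ ∈ R (f i0) := by
      have : c ⟨i0, rfl⟩ • t ⟨i0, rfl⟩ = w - ∑ i ∈ Finset.univ.erase
          (⟨i0, rfl⟩ : {i : I // f i = f i0}), c i • t i := by
        rw [hwdef, ← herase]; abel
      rw [this]
      exact Submodule.sub_mem _ (step2 hw) hrest
    have := Submodule.smul_mem _ (c ⟨i0, rfl⟩)⁻¹ hc1
    rwa [smul_smul, inv_mul_cancel₀ hi0, one_smul] at this
  have step4 : gres.Surj := by
    intro r m
    obtain ⟨x, rfl⟩ := hg.1 r m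
    have : g.app r x ∈ R r := by
      induction x using freePers_induction with
      | zero => simp
      | add a b ha hb => rw [map_add]; exact Submodule.add_mem _ ha hb
      | single a cc =>
        obtain ⟨i, hi⟩ := a
        by_cases hne : i = i0
        · subst hne
          rw [hom_single g r i hi cc]
          obtain ⟨y, hy⟩ := step3
          refine Submodule.smul_mem _ _ ⟨(freePers k I' f2).map hi y, ?_⟩
          rw [gres.nat hi y, hy]
        · exact step1 r i hi hne cc
    exact this
  have hcard := hg.2 I' inferInstance f2 gres step4
  have hlt : Fintype.card I' < Fintype.card I :=
    Fintype.card_subtype_lt (x := i0) (by simp)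
  omega

end Aux3
section Aux4

variable {k : Type} [Field k]

/-- Identity conversion exposing the `Finsupp` structure of `freePers`. -/
def coeffs {I : Type} (f : I → P) {r : P} (x : (freePers k I f).obj r) :
    {i : I // f i ≤ r} →₀ k := x

lemma betti_le {I : Type} [Fintype I] {f : I → P} {M : PersMod P k}
    {g : PersHom k (freePers k I f) M} (hg : IsProjCover f M g)
    {J : Type} [Fintype J] {f' : J → P} (h : PersHom k (freePers k J f') M)
    (hh : h.Surj) (p : P) :
    Nat.card {i : I // f i = p} ≤ Nat.card {j : J // f' j = p} := by
  classical
  have hspan := bettiFam_span h hh p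
  haveI : Module.Finite k (M.obj p ⧸ rad M p) :=
    ⟨by rw [← hspan]; exact Submodule.fg_span (Set.finite_range _)⟩
  have h1 : Fintype.card {i : I // f i = p} ≤ Module.finrank k (M.obj p ⧸ rad M p) :=
    (cover_li hg p).fintype_card_le_finrank
  have h2 : Module.finrank k (M.obj p ⧸ rad M p) ≤ Fintype.card {j : J // f' j = p} := by
    have e1 : Module.finrank k (M.obj p ⧸ rad M p)
        = Module.finrank k (Submodule.span k (Set.range (bettiFam h p))) := by
      rw [hspan, finrank_top]
    rw [e1]
    refine le_trans (finrank_span_le_card _) ?_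
    rw [Set.toFinset_range]
    exact Finset.card_image_le.trans (by simp)
  rw [Nat.card_eq_fintype_card, Nat.card_eq_fintype_card]
  exact h1.trans h2

lemma mk_expand {I : Type} [Fintype I] {f : I → P} {M : PersMod P k}
    (g : PersHom k (freePers k I f) M) (p : P) [Fintype {i : I // f i = p}]
    (x : (freePers k I f).obj p) :
    Submodule.Quotient.mk (p := rad M p) (g.app p x)
      = ∑ a : {i : I // f i = p}, coeffs f x ⟨a.1, a.2.le⟩ • bettiFam g p a := by
  classical
  simp only [coeffs]
  induction x using freePers_induction with
  | zero =>
    rw [map_zero, Submodule.Quotient.mk_zero]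
    exact (Finset.sum_eq_zero fun a _ => zero_smul k _).symm
  | add u v hu hv =>
    rw [map_add, Submodule.Quotient.mk_add, hu, hv, ← Finset.sum_add_distrib]
    exact Finset.sum_congr rfl fun a _ => by exact (add_smul _ _ _).symm
  | single a c =>
    obtain ⟨i, hi⟩ := a
    rcases lt_or_eq_of_le hi with hlt | heq
    · have hz : Submodule.Quotient.mk (p := rad M p)
          (g.app p (Finsupp.single ⟨i, hi⟩ c)) = 0 := by
        rw [hom_single g p i hi c, Submodule.Quotient.mk_eq_zero]
        exact Submodule.smul_mem _ _ (mem_rad hlt _)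
      rw [hz]
      refine (Finset.sum_eq_zero fun a _ => ?_).symm
      have : (Finsupp.single (⟨i, hi⟩ : {j : I // f j ≤ p}) c) ⟨a.1, a.2.le⟩ = 0 := by
        refine Finsupp.single_eq_of_ne' fun hcon => ?_
        have hval : i = a.1 := Subtype.ext_iff.1 hcon
        exact absurd (hval ▸ a.2) (ne_of_lt hlt)
      rw [this, zero_smul]
    · subst heq
      rw [Finset.sum_eq_single (⟨i, rfl⟩ : {i' : I // f i' = f i})]
      · have h2 : (Finsupp.single (⟨i, hi⟩ : {j : I // f j ≤ f i}) c)
            (⟨i, le_refl (f i)⟩ : {j : I // f j ≤ f i}) = c := Finsupp.single_eq_same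
        rw [h2, bettiFam, ← Submodule.Quotient.mk_smul]
        congr 1
        exact ((g.app (f i)).congr_arg (Finsupp.smul_single_one _ c).symm).trans (map_smul _ _ _)
      · intro a _ hne
        have : (Finsupp.single (⟨i, hi⟩ : {j : I // f j ≤ f i}) c) ⟨a.1, a.2.le⟩ = 0 :=
          Finsupp.single_eq_of_ne' fun hcon =>
            hne (Subtype.ext (Subtype.ext_iff.1 hcon).symm)
        rw [this, zero_smul]
      · intro hmem
        exact absurd (Finset.mem_univ _) hmem

open Classical in
lemma coeff_map {I : Type} {f : I → P} {r s : P} (hrs : r ≤ s)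
    (z : (freePers k I f).obj r) (i : I) (hi : f i ≤ s) :
    coeffs f (((freePers k I f).map hrs) z) ⟨i, hi⟩
      = if h : f i ≤ r then coeffs f z ⟨i, h⟩ else 0 := by
  have hinj : Function.Injective
      (fun a : {i' : I // f i' ≤ r} => (⟨a.1, le_trans a.2 hrs⟩ : {i' : I // f i' ≤ s})) :=
    fun a b hab => Subtype.ext (by simpa using hab)
  show (Finsupp.mapDomain _ (coeffs f z)) _ = _
  split_ifs with hle
  · exact Finsupp.mapDomain_apply hinj (coeffs f z) ⟨i, hle⟩
  · refine Finsupp.mapDomain_notin_range _ _ fun hcon => ?_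
    obtain ⟨⟨i', hi'⟩, heq⟩ := hcon
    have : i' = i := Subtype.ext_iff.1 heq
    subst this
    exact hle hi'

open Classical in
lemma unipotent {I : Type} [Fintype I] {f : I → P} {M : PersMod P k}
    {g : PersHom k (freePers k I f) M} (hg : IsProjCover f M g)
    (φ : PersHom k (freePers k I f) (freePers k I f))
    (hφ : ∀ (r : P) x, g.app r (φ.app r x) = g.app r x)
    (i i' : I) (h : f i' ≤ f i) (heq : f i' = f i) :
    coeffs f ((φ.app (f i)) (gen f i)) ⟨i', h⟩ = if i' = i then 1 else 0 := by
  classical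
  have e1 := mk_expand g (f i) (φ.app (f i) (gen f i))
  rw [hφ (f i) (gen f i), mk_expand g (f i) (gen f i)] at e1
  have e2 : ∑ a : {i'' : I // f i'' = f i},
      (coeffs f (gen f i (k := k)) ⟨a.1, a.2.le⟩
        - coeffs f ((φ.app (f i)) (gen f i)) ⟨a.1, a.2.le⟩)
        • bettiFam g (f i) a = 0 := by
    rw [Finset.sum_congr rfl (fun a _ => sub_smul _ _ _), Finset.sum_sub_distrib,
      ← e1, sub_self]
  have e3 := Fintype.linearIndependent_iff.1 (cover_li hg (f i)) _ e2 ⟨i', heq⟩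
  have e4 : coeffs f (gen f i (k := k)) ⟨i', heq.le⟩
      = if i' = i then 1 else 0 := by
    rw [coeffs, gen, Finsupp.single_apply]
    simp only [Subtype.mk.injEq]
    split_ifs with h1 h2 h2 <;> first | rfl | (exact absurd h1.symm h2) |
      (exact absurd h2.symm h1)
  have e5 : coeffs f ((φ.app (f i)) (gen f i)) ⟨i', heq.le⟩
      = coeffs f (gen f i (k := k)) ⟨i', heq.le⟩ :=
    (sub_eq_zero.1 e3).symm
  rw [← e4]
  exact e5

end Aux4
section Aux5

variable {k : Type} [Field k]

lemma phi_inj {I : Type} [Fintype I] {f : I → P} {M : PersMod P k}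
    {g : PersHom k (freePers k I f) M} (hg : IsProjCover f M g)
    (φ : PersHom k (freePers k I f) (freePers k I f))
    (hφ : ∀ (r : P) x, g.app r (φ.app r x) = g.app r x) (r : P) :
    Function.Injective (φ.app r) := by
  classical
  have key : ∀ X : {i : I // f i ≤ r} →₀ k,
      φ.app r X = (0 : {i : I // f i ≤ r} →₀ k) → X = 0 := by
    intro X hX
    by_contra hne
    obtain ⟨a, hamem, hamax⟩ := Set.Finite.exists_maximalFor
      (fun a : {i : I // f i ≤ r} => f a.1) ((X.support : Set {i : I // f i ≤ r}))
      (Set.toFinite _) (Finset.coe_nonempty.2 (Finsupp.support_nonempty_iff.2 hne))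
    have hamem' : a ∈ X.support := hamem
    have hzero : coeffs f (φ.app r X) a = 0 := by
      have : φ.app r X = (0 : {i : I // f i ≤ r} →₀ k) := hX
      rw [show coeffs f (φ.app r X) = φ.app r X from rfl, this]
      rfl
    have hXsum : (X.sum fun a' c => Finsupp.single a' c) = X := Finsupp.sum_single X
    have hterm : ∀ a' ∈ X.support,
        coeffs f (φ.app r (Finsupp.single a' (X a'))) a
          = X a' * (if h : f a.1 ≤ f a'.1
              then coeffs f (φ.app (f a'.1) (gen f a'.1)) ⟨a.1, h⟩ else 0) := by
      intro a' _
      have h1 : φ.app r (Finsupp.single a' (X a'))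
          = (X a') • (freePers k I f).map a'.2 (φ.app (f a'.1) (gen f a'.1)) :=
        hom_single φ r a'.1 a'.2 (X a')
      rw [h1]
      have h2 : coeffs f ((X a') • (freePers k I f).map a'.2 (φ.app (f a'.1) (gen f a'.1)))
          = (X a') • coeffs f ((freePers k I f).map a'.2 (φ.app (f a'.1) (gen f a'.1))) :=
        rfl
      rw [h2, Finsupp.smul_apply, smul_eq_mul,
        coeff_map a'.2 (φ.app (f a'.1) (gen f a'.1)) a.1 a.2]
    have hmain : coeffs f (φ.app r X) a = X a := by
      conv_lhs => rw [show X = X.sum fun a' c => Finsupp.single a' c from hXsum.symm]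
      rw [Finsupp.sum]
      erw [map_sum]
      have hsum : coeffs f (∑ a' ∈ X.support, φ.app r (Finsupp.single a' (X a')))
          = ∑ a' ∈ X.support, coeffs f (φ.app r (Finsupp.single a' (X a'))) := rfl
      rw [hsum, Finsupp.finset_sum_apply]
      rw [Finset.sum_congr rfl hterm]
      rw [Finset.sum_eq_single a]
      · rw [dif_pos (le_refl (f a.1)), unipotent hg φ hφ a.1 a.1 (le_refl _) rfl,
          if_pos rfl, mul_one]
      · intro a' hmem hne'
        split_ifs with hle
        · have heq : f a.1 = f a'.1 := le_antisymm hle (hamax hmem hle)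
          rw [unipotent hg φ hφ a'.1 a.1 hle heq, if_neg, mul_zero]
          intro hcon
          exact hne' (Subtype.ext hcon).symm
        · exact mul_zero _
      · intro hcon
        exact absurd hamem' hcon
    exact Finsupp.mem_support_iff.1 hamem' (by rw [← hmain, hzero])
  intro x y hxy
  have := key (x - y) (by rw [map_sub, hxy, sub_self]; rfl)
  have h2 : x - y = (0 : (freePers k I f).obj r) := this
  exact sub_eq_zero.1 h2

/-- The endomorphism seen as a map of `Finsupp`s (so typeclass search works). -/
def endoF {I : Type} (f : I → P)
    (φ : PersHom k (freePers k I f) (freePers k I f)) (r : P) :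
    ({i : I // f i ≤ r} →₀ k) →ₗ[k] ({i : I // f i ≤ r} →₀ k) := φ.app r

lemma phi_bij {I : Type} [Fintype I] {f : I → P} {M : PersMod P k}
    {g : PersHom k (freePers k I f) M} (hg : IsProjCover f M g)
    (φ : PersHom k (freePers k I f) (freePers k I f))
    (hφ : ∀ (r : P) x, g.app r (φ.app r x) = g.app r x) (r : P) :
    Function.Bijective (φ.app r) := by
  classical
  have hinj : Function.Injective (endoF f φ r) := phi_inj hg φ hφ r
  have hsurj : Function.Surjective (endoF f φ r) :=
    LinearMap.injective_iff_surjective.1 hinj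
  exact ⟨hinj, hsurj⟩

/-- Gradewise inverse of a gradewise-bijective endomorphism. -/
noncomputable def invHom {I : Type} {f : I → P}
    (φ : PersHom k (freePers k I f) (freePers k I f))
    (hbij : ∀ r : P, Function.Bijective (φ.app r)) :
    PersHom k (freePers k I f) (freePers k I f) where
  app r := ((LinearEquiv.ofBijective (φ.app r) (hbij r)).symm :
    (freePers k I f).obj r →ₗ[k] (freePers k I f).obj r)
  nat {r s} hrs x := by
    apply (hbij s).1
    have h1 : ∀ z, φ.app s ((LinearEquiv.ofBijective (φ.app s) (hbij s)).symm z) = z :=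
      fun z => (LinearEquiv.ofBijective (φ.app s) (hbij s)).apply_symm_apply z
    have h2 : ∀ z, φ.app r ((LinearEquiv.ofBijective (φ.app r) (hbij r)).symm z) = z :=
      fun z => (LinearEquiv.ofBijective (φ.app r) (hbij r)).apply_symm_apply z
    beta_reduce
    simp only [LinearEquiv.coe_coe]
    rw [h1, φ.nat hrs, h2]

lemma invHom_right {I : Type} {f : I → P}
    (φ : PersHom k (freePers k I f) (freePers k I f))
    (hbij : ∀ r : P, Function.Bijective (φ.app r)) (r : P)
    (x : (freePers k I f).obj r) : φ.app r ((invHom φ hbij).app r x) = x :=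
  (LinearEquiv.ofBijective (φ.app r) (hbij r)).apply_symm_apply x

lemma invHom_left {I : Type} {f : I → P}
    (φ : PersHom k (freePers k I f) (freePers k I f))
    (hbij : ∀ r : P, Function.Bijective (φ.app r)) (r : P)
    (x : (freePers k I f).obj r) : (invHom φ hbij).app r (φ.app r x) = x :=
  (LinearEquiv.ofBijective (φ.app r) (hbij r)).symm_apply_apply x

end Aux5

/-- a finite projective cover `g : Q → M` has pointwise smaller Betti table
than any surjection `h : Q' → M` from a projective of finite rank, and `Q` is a direct
summand of `Q'`: there are `g' : Q → Q'`, `h' : Q' → Q` with `h ∘ g' = g`, `g ∘ h' = h`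
and `h' ∘ g' = id`. -/
theorem projCover_betti_le_and_summand (k : Type) [Field k] (M : PersMod P k)
    (I : Type) [Fintype I] (f : I → P) (g : PersHom k (freePers k I f) M)
    (hg : IsProjCover f M g)
    (J : Type) [Fintype J] (f' : J → P) (h : PersHom k (freePers k J f') M)
    (hh : h.Surj) :
    (∀ p : P, Nat.card {i : I // f i = p} ≤ Nat.card {j : J // f' j = p}) ∧
    ∃ (g' : PersHom k (freePers k I f) (freePers k J f'))
      (h' : PersHom k (freePers k J f') (freePers k I f)),
        (∀ (r : P) x, h.app r (g'.app r x) = g.app r x) ∧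
        (∀ (r : P) x, g.app r (h'.app r x) = h.app r x) ∧
        (∀ (r : P) x, h'.app r (g'.app r x) = x) := by
  classical
  refine ⟨fun p => betti_le hg h hh p, ?_⟩
  set g0 : PersHom k (freePers k I f) (freePers k J f') := lift f h hh g with hg0
  set h0 : PersHom k (freePers k J f') (freePers k I f) := lift f' g hg.1 h with hh0
  set φ : PersHom k (freePers k I f) (freePers k I f) := PersHom.comp h0 g0 with hφdef
  have hφ : ∀ (r : P) x, g.app r (φ.app r x) = g.app r x := by
    intro r x
    show g.app r (h0.app r (g0.app r x)) = g.app r x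
    rw [hh0, lift_spec f' g hg.1 h, hg0, lift_spec f h hh g]
  have hbij := phi_bij hg φ hφ
  refine ⟨g0, PersHom.comp (invHom φ hbij) h0, ?_, ?_, ?_⟩
  · intro r x
    exact lift_spec f h hh g r x
  · intro r x
    show g.app r ((invHom φ hbij).app r (h0.app r x)) = h.app r x
    have hkey : ∀ y, g.app r ((invHom φ hbij).app r y) = g.app r y := by
      intro y
      have h1 := hφ r ((invHom φ hbij).app r y)
      rw [invHom_right φ hbij r y] at h1
      exact h1.symm
    rw [hkey, hh0, lift_spec f' g hg.1 h]
  · intro r x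
    show (invHom φ hbij).app r (h0.app r (g0.app r x)) = x
    have : h0.app r (g0.app r x) = φ.app r x := rfl
    rw [this, invHom_left φ hbij r x]
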